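/- Consider instances on the real line: a finite set A of alternatives, k ≥ 1 districts, each district d being a nonempty finite multiset N_d of agent positions. Fix α = (3-√5)/2. Define the mechanism: for each district d, let y_d ∈ A be an alternative minimizing distance to the rightmost agent of d; let w be the ⌈α·k⌉-th leftmost among the representatives y_d (counted with multiplicity). Then for every alternative o ∈ A, (1/k) Σ_d max_{i∈N_d} |i - w| ≤ (2+√5) · (1/k) Σ_d max_{i∈N_d} |i - o|. -/

import Mathlib

set_option maxHeartbeats 2000000 in
theorem stmt_11 (k : ℕ) (A : Finset ℝ)
    (n : Fin (k + 1) → ℕ) (p : (d : Fin (k + 1)) → Fin (n d + 1) → ℝ)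
    (y : Fin (k + 1) → ℝ)
    (hy : ∀ d, y d ∈ A ∧ ∀ a ∈ A,
      |Finset.univ.sup' Finset.univ_nonempty (p d) - y d| ≤
        |Finset.univ.sup' Finset.univ_nonempty (p d) - a|)
    (α : ℝ) (hα : α = (3 - Real.sqrt 5) / 2)
    (w : ℝ)
    (hw : (Multiset.sort
        (Multiset.map y (Finset.univ : Finset (Fin (k + 1))).val) (· ≤ ·))[⌈α * (k + 1 : ℕ)⌉₊ - 1]?
      = some w)
    (o : ℝ) (ho : o ∈ A) :
    (1 / (k + 1 : ℕ) : ℝ) *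
        ∑ d, Finset.univ.sup' Finset.univ_nonempty (fun i => |p d i - w|) ≤
      (2 + Real.sqrt 5) *
        ((1 / (k + 1 : ℕ) : ℝ) *
          ∑ d, Finset.univ.sup' Finset.univ_nonempty (fun i => |p d i - o|)) := by
  classical
  have s5 : Real.sqrt 5 * Real.sqrt 5 = 5 := Real.mul_self_sqrt (by norm_num)
  have s5lb : 2 ≤ Real.sqrt 5 := by nlinarith [Real.sqrt_nonneg 5]
  have s5ub : Real.sqrt 5 ≤ 3 := by nlinarith [Real.sqrt_nonneg 5]
  have hα0 : 0 < α := by rw [hα]; nlinarith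
  have hα1 : α < 1 := by rw [hα]; nlinarith
  have hK0 : (0:ℝ) < ((k+1:ℕ):ℝ) := by positivity
  set K : ℝ := ((k+1:ℕ):ℝ) with hKdef
  set m : ℕ := ⌈α * ((k+1:ℕ):ℝ)⌉₊ with hmdef
  have hmlo : α * K ≤ (m:ℝ) := Nat.le_ceil _
  have hmhi : (m:ℝ) < α * K + 1 := Nat.ceil_lt_add_one (by positivity)
  have hm1 : 1 ≤ m := Nat.one_le_ceil_iff.mpr (by positivity)
  set l : List ℝ := Multiset.sort
      (Multiset.map y (Finset.univ : Finset (Fin (k+1))).val) (· ≤ ·) with hldef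
  have hlen : l.length = k + 1 := by
    rw [hldef, Multiset.length_sort, Multiset.card_map]
    simp
  obtain ⟨hjlt, hjw⟩ := List.getElem?_eq_some_iff.mp hw
  rw [hlen] at hjlt
  have hmk : m ≤ k + 1 := by omega
  have hsorted : l.Pairwise (· ≤ ·) := by rw [hldef]; exact Multiset.pairwise_sort _ _
  have hmono : ∀ (i₁ i₂ : ℕ) (h1 : i₁ < l.length) (h2 : i₂ < l.length),
      i₁ ≤ i₂ → l[i₁] ≤ l[i₂] := by
    intro i₁ i₂ h1 h2 h
    have := hsorted.rel_get_of_le (a := ⟨i₁, h1⟩) (b := ⟨i₂, h2⟩) h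
    simpa using this
  have hcount : ∀ (q : ℝ → Prop) [DecidablePred q],
      (Finset.univ.filter (fun d => q (y d))).card = l.countP (fun x => decide (q x)) := by
    intro q _
    have h1 : Multiset.countP q
        (Multiset.map y (Finset.univ : Finset (Fin (k+1))).val)
        = l.countP (fun x => decide (q x)) := by
      conv_lhs => rw [← Multiset.sort_eq
        (Multiset.map y (Finset.univ : Finset (Fin (k+1))).val) (· ≤ ·)]
      rw [← hldef]
      exact Multiset.coe_countP q l
    rw [← h1, Multiset.countP_map, ← Finset.filter_val]
    rfl
  -- counting lower bounds
  have htake : ∀ a ∈ l.take m, a ≤ w := by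
    intro a ha
    obtain ⟨i, hi, rfl⟩ := List.getElem_of_mem ha
    rw [List.getElem_take]
    have hi' : i < m := by
      have := hi; rw [List.length_take, hlen] at this; omega
    calc l[i]'(by omega) ≤ l[m-1]'(by omega) := hmono i (m-1) (by omega) (by omega) (by omega)
      _ = w := hjw
  have hdrop : ∀ a ∈ l.drop (m-1), w ≤ a := by
    intro a ha
    obtain ⟨i, hi, rfl⟩ := List.getElem_of_mem ha
    rw [List.getElem_drop]
    have hi' : i < l.length - (m-1) := by
      have := hi; rw [List.length_drop] at this; omega
    calc w = l[m-1]'(by omega) := hjw.symm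
      _ ≤ l[(m-1)+i]'(by omega) := hmono (m-1) ((m-1)+i) (by omega) (by omega) (by omega)
  have hSm : m ≤ (Finset.univ.filter (fun d => y d ≤ w)).card := by
    rw [hcount (fun x => x ≤ w)]
    have h1 : (l.take m).countP (fun x => decide (x ≤ w)) = (l.take m).length :=
      List.countP_eq_length.mpr (fun a ha => decide_eq_true (htake a ha))
    have h2 : l.countP (fun x => decide (x ≤ w))
        = (l.take m).countP (fun x => decide (x ≤ w))
          + (l.drop m).countP (fun x => decide (x ≤ w)) := by
      conv_lhs => rw [← List.take_append_drop m l]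
      rw [List.countP_append]
    rw [h2, h1, List.length_take, hlen]
    omega
  have hTm : k + 2 - m ≤ (Finset.univ.filter (fun d => w ≤ y d)).card := by
    rw [hcount (fun x => w ≤ x)]
    have h1 : (l.drop (m-1)).countP (fun x => decide (w ≤ x)) = (l.drop (m-1)).length :=
      List.countP_eq_length.mpr (fun a ha => decide_eq_true (hdrop a ha))
    have h2 : l.countP (fun x => decide (w ≤ x))
        = (l.take (m-1)).countP (fun x => decide (w ≤ x))
          + (l.drop (m-1)).countP (fun x => decide (w ≤ x)) := by
      conv_lhs => rw [← List.take_append_drop (m-1) l]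
      rw [List.countP_append]
    rw [h2, h1, List.length_drop, hlen]
    omega
  -- abbreviations for costs
  set M : Fin (k+1) → ℝ :=
    fun d => Finset.univ.sup' Finset.univ_nonempty (fun i => |p d i - w|) with hMdef
  set c : Fin (k+1) → ℝ :=
    fun d => Finset.univ.sup' Finset.univ_nonempty (fun i => |p d i - o|) with hcdef
  have hpc : ∀ d i, |p d i - o| ≤ c d := by
    intro d i
    rw [hcdef]
    exact Finset.le_sup' (fun i => |p d i - o|) (Finset.mem_univ i)
  have hc0 : ∀ d, 0 ≤ c d := fun d => le_trans (abs_nonneg _) (hpc d 0)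
  have hbase : ∀ d, |y d - o| ≤ 2 * c d ∧ (∀ i, p d i - y d ≤ c d) := by
    intro d
    obtain ⟨j0, -, hj0⟩ := Finset.exists_mem_eq_sup' Finset.univ_nonempty (p d)
    have h1 : |p d j0 - y d| ≤ |p d j0 - o| := by
      have := (hy d).2 o ho; rwa [hj0] at this
    have h2 : |p d j0 - o| ≤ c d := hpc d j0
    constructor
    · calc |y d - o| ≤ |y d - p d j0| + |p d j0 - o| := abs_sub_le _ _ _
        _ ≤ 2 * c d := by
            rw [abs_sub_comm]; linarith [le_abs_self (p d j0 - y d), h1.trans h2]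
    · intro i
      have h3 : p d i ≤ p d j0 := by
        rw [← hj0]; exact Finset.le_sup' _ (Finset.mem_univ i)
      have h4 : p d j0 - y d ≤ |p d j0 - y d| := le_abs_self _
      linarith [h1.trans h2]
  have lemB : ∀ d, M d ≤ c d + |o - w| := by
    intro d
    rw [hMdef]
    apply Finset.sup'_le
    intro i _
    calc |p d i - w| ≤ |p d i - o| + |o - w| := abs_sub_le _ _ _
      _ ≤ c d + |o - w| := by linarith [hpc d i]
  have lemC : ∀ d, y d ≤ w → o - w ≤ 2 * c d := by
    intro d hd
    have h1 := (hbase d).1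
    have h2 : o - y d ≤ |y d - o| := by rw [abs_sub_comm]; exact le_abs_self _
    linarith
  have lemE : ∀ d, w ≤ y d → w - o ≤ 2 * c d := by
    intro d hd
    have h1 := (hbase d).1
    have h2 : y d - o ≤ |y d - o| := le_abs_self _
    linarith
  have lemA : ∀ d, y d ≤ w → w ≤ o → M d ≤ c d := by
    intro d hd hwo
    rw [hMdef]
    apply Finset.sup'_le
    intro i _
    rw [abs_sub_le_iff]
    constructor
    · have := (hbase d).2 i
      linarith
    · have h2 : o - p d i ≤ |p d i - o| := by rw [abs_sub_comm]; exact le_abs_self _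
      linarith [hpc d i]
  have lemD : ∀ d, o ≤ w → w ≤ y d → M d ≤ 3 * c d := by
    intro d how hd
    rw [hMdef]
    apply Finset.sup'_le
    intro i _
    rw [abs_sub_le_iff]
    constructor
    · have h1 := le_abs_self (p d i - o)
      linarith [hpc d i, hc0 d]
    · have h2 : o - p d i ≤ |p d i - o| := by rw [abs_sub_comm]; exact le_abs_self _
      linarith [hpc d i, lemE d hd]
  -- reduce to total-sum inequality
  suffices key : ∑ d, M d ≤ (2 + Real.sqrt 5) * ∑ d, c d by
    have h1 : (2 + Real.sqrt 5) * ((1 / ((k+1:ℕ):ℝ)) * ∑ d, c d)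
        = (1 / ((k+1:ℕ):ℝ)) * ((2 + Real.sqrt 5) * ∑ d, c d) := by ring
    rw [h1]
    exact mul_le_mul_of_nonneg_left key (by positivity)
  rcases le_or_gt w o with hwo | how
  · -- case w ≤ o
    set S := Finset.univ.filter (fun d => y d ≤ w) with hSdef
    set Sc := Finset.univ.filter (fun d => ¬ y d ≤ w) with hScdef
    have hsplitM : ∑ d ∈ S, M d + ∑ d ∈ Sc, M d = ∑ d, M d :=
      Finset.sum_filter_add_sum_filter_not Finset.univ _ M
    have hsplitc : ∑ d ∈ S, c d + ∑ d ∈ Sc, c d = ∑ d, c d :=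
      Finset.sum_filter_add_sum_filter_not Finset.univ _ c
    have hcards : S.card + Sc.card = k + 1 := by
      have := Finset.card_filter_add_card_filter_not
        (s := (Finset.univ : Finset (Fin (k+1)))) (fun d => y d ≤ w)
      simpa [hSdef, hScdef] using this
    have hA : ∑ d ∈ S, M d ≤ ∑ d ∈ S, c d := by
      apply Finset.sum_le_sum
      intro d hd
      exact lemA d (Finset.mem_filter.mp hd).2 hwo
    have e0 : (0:ℝ) ≤ o - w := by linarith
    have hB : ∑ d ∈ Sc, M d ≤ ∑ d ∈ Sc, c d + (Sc.card : ℝ) * (o - w) := by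
      calc ∑ d ∈ Sc, M d ≤ ∑ d ∈ Sc, (c d + (o - w)) := by
            apply Finset.sum_le_sum
            intro d _
            have := lemB d
            rwa [abs_of_nonneg e0] at this
        _ = ∑ d ∈ Sc, c d + (Sc.card : ℝ) * (o - w) := by
            rw [Finset.sum_add_distrib, Finset.sum_const, nsmul_eq_mul]
    have hCsum : (S.card : ℝ) * (o - w) ≤ 2 * ∑ d ∈ S, c d := by
      calc (S.card : ℝ) * (o - w) = ∑ _d ∈ S, (o - w) := by
            rw [Finset.sum_const, nsmul_eq_mul]
        _ ≤ ∑ d ∈ S, 2 * c d := by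
            apply Finset.sum_le_sum
            intro d hd
            exact lemC d (Finset.mem_filter.mp hd).2
        _ = 2 * ∑ d ∈ S, c d := by rw [Finset.mul_sum]
    -- real arithmetic
    have hCS0 : 0 ≤ ∑ d ∈ S, c d := Finset.sum_nonneg (fun d _ => hc0 d)
    have hCSc0 : 0 ≤ ∑ d ∈ Sc, c d := Finset.sum_nonneg (fun d _ => hc0 d)
    have hC0 : 0 ≤ ∑ d, c d := Finset.sum_nonneg (fun d _ => hc0 d)
    have hmR : (m:ℝ) ≤ (S.card : ℝ) := by exact_mod_cast hSm
    have hmR1 : (1:ℝ) ≤ (m:ℝ) := by exact_mod_cast hm1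
    have hcardsR : (S.card : ℝ) + (Sc.card : ℝ) = K := by
      rw [hKdef]; exact_mod_cast hcards
    have hScR0 : (0:ℝ) ≤ (Sc.card : ℝ) := Nat.cast_nonneg _
    have halpha : 2 * K ≤ (3 + Real.sqrt 5) * (m:ℝ) := by
      have h1 : (3 + Real.sqrt 5) * (α * K) ≤ (3 + Real.sqrt 5) * (m:ℝ) :=
        mul_le_mul_of_nonneg_left hmlo (by linarith)
      have h2 : (3 + Real.sqrt 5) * (α * K) = 2 * K := by
        rw [hα]; linear_combination (-K/2) * s5
      linarith
    have hme : (m:ℝ) * (o - w) ≤ 2 * ∑ d ∈ S, c d :=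
      le_trans (mul_le_mul_of_nonneg_right hmR e0) hCsum
    have hScKm : (Sc.card : ℝ) ≤ K - (m:ℝ) := by linarith
    have h6 : (m:ℝ) * (∑ d, M d) ≤ (m:ℝ) * ((2 + Real.sqrt 5) * ∑ d, c d) := by
      have p1 : ∑ d, M d ≤ (∑ d, c d) + (Sc.card : ℝ) * (o - w) := by linarith
      have p2 : (m:ℝ) * (∑ d, M d)
          ≤ (m:ℝ) * ((∑ d, c d) + (Sc.card : ℝ) * (o - w)) :=
        mul_le_mul_of_nonneg_left p1 (by linarith)
      have p3 : (Sc.card : ℝ) * ((m:ℝ) * (o - w)) ≤ (Sc.card : ℝ) * (2 * ∑ d ∈ S, c d) :=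
        mul_le_mul_of_nonneg_left hme hScR0
      have p4 : (Sc.card : ℝ) * (2 * ∑ d ∈ S, c d) ≤ (K - (m:ℝ)) * (2 * ∑ d, c d) := by
        apply mul_le_mul hScKm (by linarith) (by linarith) (by linarith)
      have p5 : (m:ℝ) * (∑ d, c d) + (K - (m:ℝ)) * (2 * ∑ d, c d)
          ≤ (m:ℝ) * ((2 + Real.sqrt 5) * ∑ d, c d) := by
        have q1 : 0 ≤ ((3 + Real.sqrt 5) * (m:ℝ) - 2 * K) * (∑ d, c d) :=
          mul_nonneg (by linarith) hC0
        nlinarith [q1]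
      nlinarith [p2, p3, p4, p5]
    exact le_of_mul_le_mul_left h6 (by linarith)
  · -- case o < w
    set T := Finset.univ.filter (fun d => w ≤ y d) with hTdef
    set Tc := Finset.univ.filter (fun d => ¬ w ≤ y d) with hTcdef
    have hsplitM : ∑ d ∈ T, M d + ∑ d ∈ Tc, M d = ∑ d, M d :=
      Finset.sum_filter_add_sum_filter_not Finset.univ _ M
    have hsplitc : ∑ d ∈ T, c d + ∑ d ∈ Tc, c d = ∑ d, c d :=
      Finset.sum_filter_add_sum_filter_not Finset.univ _ c
    have hcards : T.card + Tc.card = k + 1 := by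
      have := Finset.card_filter_add_card_filter_not
        (s := (Finset.univ : Finset (Fin (k+1)))) (fun d => w ≤ y d)
      simpa [hTdef, hTcdef] using this
    have e0 : (0:ℝ) ≤ w - o := by linarith
    have hA : ∑ d ∈ T, M d ≤ 3 * ∑ d ∈ T, c d := by
      rw [Finset.mul_sum]
      apply Finset.sum_le_sum
      intro d hd
      exact lemD d (le_of_lt how) (Finset.mem_filter.mp hd).2
    have hB : ∑ d ∈ Tc, M d ≤ ∑ d ∈ Tc, c d + (Tc.card : ℝ) * (w - o) := by
      calc ∑ d ∈ Tc, M d ≤ ∑ d ∈ Tc, (c d + (w - o)) := by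
            apply Finset.sum_le_sum
            intro d _
            have := lemB d
            rwa [abs_of_nonpos (by linarith), neg_sub] at this
        _ = ∑ d ∈ Tc, c d + (Tc.card : ℝ) * (w - o) := by
            rw [Finset.sum_add_distrib, Finset.sum_const, nsmul_eq_mul]
    have hCsum : (T.card : ℝ) * (w - o) ≤ 2 * ∑ d ∈ T, c d := by
      calc (T.card : ℝ) * (w - o) = ∑ _d ∈ T, (w - o) := by
            rw [Finset.sum_const, nsmul_eq_mul]
        _ ≤ ∑ d ∈ T, 2 * c d := by
            apply Finset.sum_le_sum
            intro d hd
            exact lemE d (Finset.mem_filter.mp hd).2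
        _ = 2 * ∑ d ∈ T, c d := by rw [Finset.mul_sum]
    have hCT0 : 0 ≤ ∑ d ∈ T, c d := Finset.sum_nonneg (fun d _ => hc0 d)
    have hCTc0 : 0 ≤ ∑ d ∈ Tc, c d := Finset.sum_nonneg (fun d _ => hc0 d)
    have hC0 : 0 ≤ ∑ d, c d := Finset.sum_nonneg (fun d _ => hc0 d)
    have htR : K + 1 - (m:ℝ) ≤ (T.card : ℝ) := by
      have h1 : ((k + 2 - m : ℕ) : ℝ) ≤ (T.card : ℝ) := by exact_mod_cast hTm
      have h2 : ((k + 2 - m : ℕ) : ℝ) = K + 1 - (m:ℝ) := by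
        rw [hKdef]
        have : (k + 2 - m) + m = k + 2 := by omega
        push_cast [Nat.cast_sub (by omega : m ≤ k + 2)]
        ring
      linarith
    have hcardsR : (T.card : ℝ) + (Tc.card : ℝ) = K := by
      rw [hKdef]; exact_mod_cast hcards
    have hTcR0 : (0:ℝ) ≤ (Tc.card : ℝ) := Nat.cast_nonneg _
    have htR1 : (1:ℝ) ≤ (T.card : ℝ) := by
      have : (m:ℝ) ≤ K := by rw [hKdef]; exact_mod_cast hmk
      linarith
    have halpha : 2 * K ≤ (1 + Real.sqrt 5) * (T.card : ℝ) := by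
      have h1 : (1 + Real.sqrt 5) * (K + 1 - (m:ℝ)) ≤ (1 + Real.sqrt 5) * (T.card : ℝ) :=
        mul_le_mul_of_nonneg_left htR (by linarith)
      have h2 : K + 1 - (m:ℝ) ≥ (1 - α) * K := by linarith
      have h3 : (1 + Real.sqrt 5) * ((1 - α) * K) = 2 * K := by
        rw [hα]; linear_combination (K/2) * s5
      nlinarith [h1, h2, h3]
    have hte : (T.card : ℝ) * (w - o) ≤ 2 * ∑ d ∈ T, c d := hCsum
    have hTcKt : (Tc.card : ℝ) = K - (T.card : ℝ) := by linarith
    have h6 : (T.card:ℝ) * (∑ d, M d) ≤ (T.card:ℝ) * ((2 + Real.sqrt 5) * ∑ d, c d) := by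
      have p1 : ∑ d, M d ≤ (∑ d, c d) + 2 * (∑ d ∈ T, c d) + (Tc.card : ℝ) * (w - o) := by
        linarith
      have p2 : (T.card:ℝ) * (∑ d, M d)
          ≤ (T.card:ℝ) * ((∑ d, c d) + 2 * (∑ d ∈ T, c d) + (Tc.card : ℝ) * (w - o)) :=
        mul_le_mul_of_nonneg_left p1 (by linarith)
      have p3 : (Tc.card : ℝ) * ((T.card:ℝ) * (w - o)) ≤ (Tc.card : ℝ) * (2 * ∑ d ∈ T, c d) :=
        mul_le_mul_of_nonneg_left hte hTcR0
      have p4 : (T.card:ℝ) * (2 * ∑ d ∈ T, c d) + (Tc.card : ℝ) * (2 * ∑ d ∈ T, c d)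
          = K * (2 * ∑ d ∈ T, c d) := by rw [← add_mul, hcardsR]
      have p5 : K * (2 * ∑ d ∈ T, c d) ≤ K * (2 * ∑ d, c d) := by
        apply mul_le_mul_of_nonneg_left _ (by linarith)
        have : ∑ d ∈ T, c d ≤ ∑ d, c d := by linarith
        linarith
      have p6 : (T.card:ℝ) * (∑ d, c d) + K * (2 * ∑ d, c d)
          ≤ (T.card:ℝ) * ((2 + Real.sqrt 5) * ∑ d, c d) := by
        have q1 : 0 ≤ ((1 + Real.sqrt 5) * (T.card:ℝ) - 2 * K) * (∑ d, c d) :=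
          mul_nonneg (by linarith) hC0
        nlinarith [q1]
      nlinarith [p2, p3, p4, p5, p6]
    exact le_of_mul_le_mul_left h6 (by linarith)
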